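/- Let Γ be a group generated by a finite symmetric set S = S⁻¹ ⊆ Γ whose growth function satisfies γ_S(n−1) ≥ C·exp(b·n^α) for every integer n ≥ 1, where C, b > 0 and 0 < α ≤ 1 are real constants. Then for every ε > 0 there exists N ∈ ℕ such that every finite subset D ⊆ Γ with |D| ≥ N satisfies |∂_S D| / |D| ≥ ( b / ((1+ε)·log|D|) )^{1/α}. -/

import Mathlib

open scoped Pointwise

variable {G : Type*} [Group G] [DecidableEq G]

/-- The ball of radius `r` in the word metric: elements of `G` expressible as
a product of at most `r` elements of `S`. -/
def wordBall (S : Finset G) : ℕ → Finset G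
  | 0 => {1}
  | r + 1 => wordBall S r ∪ S * wordBall S r

/-- The inner boundary of a finite set `D` with respect to the generating set `S`. -/
def innerBoundary (S D : Finset G) : Finset G :=
  D.filter fun x => ∃ s ∈ S, s * x ∉ D

lemma one_mem_wordBall (S : Finset G) : ∀ r : ℕ, (1 : G) ∈ wordBall S r
  | 0 => by simp [wordBall]
  | r + 1 => by
      rw [wordBall]
      exact Finset.mem_union_left _ (one_mem_wordBall S r)

lemma sdiff_smul_subset_innerBoundary (S : Finset G) (hsymm : ∀ s ∈ S, s⁻¹ ∈ S)
    (D : Finset G) {s : G} (hs : s ∈ S) : D \ s • D ⊆ innerBoundary S D := by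
  intro x hx
  rw [Finset.mem_sdiff] at hx
  refine Finset.mem_filter.2 ⟨hx.1, s⁻¹, hsymm s hs, fun h => ?_⟩
  exact hx.2 (Finset.inv_smul_mem_iff.1 (by rwa [smul_eq_mul]))

lemma card_sdiff_smul_le (S : Finset G) (hsymm : ∀ s ∈ S, s⁻¹ ∈ S) (D : Finset G) :
    ∀ r : ℕ, ∀ g ∈ wordBall S r, (D \ g • D).card ≤ r * (innerBoundary S D).card := by
  intro r
  induction r with
  | zero =>
    intro g hg
    simp only [wordBall, Finset.mem_singleton] at hg
    subst hg
    simp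
  | succ r ih =>
    intro g hg
    rw [wordBall, Finset.mem_union] at hg
    rcases hg with hg | hg
    · exact (ih g hg).trans (Nat.mul_le_mul_right _ (Nat.le_succ r))
    · obtain ⟨s, hs, h, hh, rfl⟩ := Finset.mem_mul.1 hg
      have hsub : D \ (s * h) • D ⊆ (D \ s • D) ∪ s • (D \ h • D) := by
        intro x hx
        rw [Finset.mem_sdiff] at hx
        by_cases hxs : x ∈ s • D
        · obtain ⟨y, hy, rfl⟩ := Finset.mem_smul_finset.1 hxs
          refine Finset.mem_union_right _
            (Finset.smul_mem_smul_finset (Finset.mem_sdiff.2 ⟨hy, fun hyh => ?_⟩))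
          exact hx.2 (by rw [mul_smul]; exact Finset.smul_mem_smul_finset hyh)
        · exact Finset.mem_union_left _ (Finset.mem_sdiff.2 ⟨hx.1, hxs⟩)
      calc (D \ (s * h) • D).card
          ≤ ((D \ s • D) ∪ s • (D \ h • D)).card := Finset.card_le_card hsub
        _ ≤ (D \ s • D).card + (s • (D \ h • D)).card := Finset.card_union_le _ _
        _ ≤ (innerBoundary S D).card + r * (innerBoundary S D).card := by
            refine Nat.add_le_add
              (Finset.card_le_card (sdiff_smul_subset_innerBoundary S hsymm D hs)) ?_
            rw [Finset.card_smul_finset]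
            exact ih h hh
        _ = (r + 1) * (innerBoundary S D).card := by ring

lemma sum_card_inter_le (B D : Finset G) :
    ∑ g ∈ B, (D ∩ g • D).card ≤ D.card * D.card := by
  have h1 : ∀ g : G, (D ∩ g • D).card = ∑ x ∈ D, if x ∈ g • D then 1 else 0 := by
    intro g
    rw [← Finset.filter_mem_eq_inter, Finset.card_filter]
  calc ∑ g ∈ B, (D ∩ g • D).card
      = ∑ g ∈ B, ∑ x ∈ D, if x ∈ g • D then 1 else 0 := by
        exact Finset.sum_congr rfl fun g _ => h1 g
    _ = ∑ x ∈ D, ∑ g ∈ B, if x ∈ g • D then 1 else 0 := Finset.sum_comm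
    _ ≤ ∑ _x ∈ D, D.card := by
        refine Finset.sum_le_sum fun x hx => ?_
        rw [← Finset.card_filter]
        refine Finset.card_le_card_of_injOn (fun g => g⁻¹ * x) ?_ ?_
        · intro g hg
          rw [Finset.mem_coe, Finset.mem_filter] at hg
          have : g⁻¹ • x ∈ D := Finset.inv_smul_mem_iff.2 hg.2
          simpa [smul_eq_mul] using this
        · intro g _ h _ hgh
          exact inv_injective (mul_right_cancel hgh)
    _ = D.card * D.card := by
        rw [Finset.sum_const, smul_eq_mul]

set_option maxHeartbeats 1000000 in
theorem stmt9 (S : Finset G)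
    (hsymm : ∀ s ∈ S, s⁻¹ ∈ S) (hgen : Subgroup.closure (S : Set G) = ⊤)
    (C b α : ℝ) (hC : 0 < C) (hb : 0 < b) (hα0 : 0 < α) (hα1 : α ≤ 1)
    (hgrowth : ∀ n : ℕ, 1 ≤ n →
      C * Real.exp (b * (n : ℝ) ^ α) ≤ ((wordBall S (n - 1)).card : ℝ)) :
    ∀ ε : ℝ, 0 < ε → ∃ N : ℕ, ∀ D : Finset G, N ≤ D.card →
      (b / ((1 + ε) * Real.log (D.card : ℝ))) ^ (1 / α) ≤
        ((innerBoundary S D).card : ℝ) / (D.card : ℝ) := by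
  intro ε hε
  have hε1 : (0 : ℝ) < 1 + ε := by linarith
  set c : ℝ := ((1 + ε / 2) / (1 + ε)) ^ (1 / α) with hc
  have hc0 : 0 ≤ c := Real.rpow_nonneg (div_nonneg (by linarith) hε1.le) _
  have hc1 : c < 1 :=
    Real.rpow_lt_one (div_nonneg (by linarith) hε1.le) (by rw [div_lt_one hε1]; linarith) (one_div_pos.2 hα0)
  set δ : ℝ := (1 - c) / 2 with hδ
  have hδ0 : 0 < δ := by rw [hδ]; linarith
  obtain ⟨K, hK⟩ := exists_nat_gt (max 2 (1 / δ))
  have hK2 : (2 : ℝ) < K := lt_of_le_of_lt (le_max_left _ _) hK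
  have hK0 : (0 : ℝ) < K := by linarith
  have hKδ : 1 / δ < K := lt_of_le_of_lt (le_max_right _ _) hK
  have hinvK : 1 / (K : ℝ) ≤ δ := by
    rw [div_le_iff₀ hK0]
    have := (div_lt_iff₀ hδ0).1 hKδ
    nlinarith
  have hδα : 0 < δ ^ α := Real.rpow_pos_of_pos hδ0 α
  have hlogtend : Filter.Tendsto (fun m : ℕ => Real.log m) Filter.atTop Filter.atTop :=
    Real.tendsto_log_atTop.comp tendsto_natCast_atTop_atTop
  set A : ℝ := max ((2 / ε) * Real.log ((K : ℝ) / C))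
      (max (- Real.log ((K : ℝ) / C)) (b / ((1 + ε) * δ ^ α))) with hA
  have hev := (hlogtend.eventually_ge_atTop A).and (Filter.eventually_ge_atTop 2)
  obtain ⟨N, hN⟩ := Filter.eventually_atTop.1 hev
  refine ⟨N, fun D hD => ?_⟩
  obtain ⟨hAm, h2⟩ := hN D.card hD
  set m : ℝ := (D.card : ℝ) with hm
  have hm2 : (2 : ℝ) ≤ m := by rw [hm]; exact_mod_cast h2
  have hm0 : (0 : ℝ) < m := by linarith
  set L : ℝ := Real.log m with hLdef
  have hL0 : 0 < L := Real.log_pos (by linarith)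
  set xK : ℝ := Real.log ((K : ℝ) / C) with hxK
  have hA1 : (2 / ε) * xK ≤ L := le_trans (le_max_left _ _) hAm
  have hA2 : -xK ≤ L := le_trans ((le_max_left _ _).trans (le_max_right _ _)) hAm
  have hA3 : b / ((1 + ε) * δ ^ α) ≤ L :=
    le_trans ((le_max_right _ _).trans (le_max_right _ _)) hAm
  have hE2 : xK ≤ (ε / 2) * L := by
    rcases le_or_gt xK 0 with h | h
    · nlinarith
    · have h2' := mul_le_mul_of_nonneg_left hA1 (by linarith : (0 : ℝ) ≤ ε / 2)
      have heq : (ε / 2) * ((2 / ε) * xK) = xK := by field_simp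
      rw [heq] at h2'
      exact h2'
  have hE4 : b / ((1 + ε) * L) ≤ δ ^ α := by
    rw [div_le_iff₀ (mul_pos hε1 hL0)]
    have h1 : b ≤ L * ((1 + ε) * δ ^ α) := (div_le_iff₀ (mul_pos hε1 hδα)).1 hA3
    nlinarith
  -- choice of radius
  have hbT : 0 ≤ L + xK := by linarith
  set T : ℝ := (L + xK) / b with hT
  have hT0 : 0 ≤ T := div_nonneg hbT hb.le
  set R : ℝ := T ^ (1 / α) with hR
  have hR0 : 0 ≤ R := Real.rpow_nonneg hT0 _
  set r : ℕ := ⌈R⌉₊ with hr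
  have hrR : R ≤ (r : ℝ) := Nat.le_ceil R
  have hrR1 : (r : ℝ) ≤ R + 1 := (Nat.ceil_lt_add_one hR0).le
  have hball : C * Real.exp (b * ((r + 1 : ℕ) : ℝ) ^ α) ≤ ((wordBall S r).card : ℝ) := by
    have := hgrowth (r + 1) (Nat.le_add_left 1 r)
    simpa using this
  have hKm : (K : ℝ) * m ≤ ((wordBall S r).card : ℝ) := by
    refine le_trans ?_ hball
    have hTle : T ≤ ((r + 1 : ℕ) : ℝ) ^ α := by
      have h1 : R ≤ ((r + 1 : ℕ) : ℝ) := by push_cast; linarith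
      have h2 := Real.rpow_le_rpow hR0 h1 hα0.le
      rwa [hR, ← Real.rpow_mul hT0, one_div_mul_cancel hα0.ne', Real.rpow_one] at h2
    have hlogeq : b * T = Real.log (m * ((K : ℝ) / C)) := by
      rw [Real.log_mul hm0.ne' (div_pos hK0 hC).ne', hT]
      field_simp
      rfl
    have hexpeq : (K : ℝ) * m = C * Real.exp (b * T) := by
      rw [hlogeq, Real.exp_log (mul_pos hm0 (div_pos hK0 hC))]
      field_simp
    rw [hexpeq]
    exact mul_le_mul_of_nonneg_left (Real.exp_le_exp.2 (mul_le_mul_of_nonneg_left hTle hb.le)) hC.le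
  -- averaging argument
  have hBne : (wordBall S r).Nonempty := ⟨1, one_mem_wordBall S r⟩
  obtain ⟨g, hgB, hgmin⟩ :=
    Finset.exists_min_image (wordBall S r) (fun g => (D ∩ g • D).card) hBne
  have hsumN : (wordBall S r).card * (D ∩ g • D).card ≤ D.card * D.card := by
    have h1 : (wordBall S r).card • (D ∩ g • D).card
        ≤ ∑ h ∈ wordBall S r, (D ∩ h • D).card :=
      Finset.card_nsmul_le_sum _ _ _ hgmin
    simpa [smul_eq_mul] using h1.trans (sum_card_inter_le (wordBall S r) D)
  set f : ℝ := ((D ∩ g • D).card : ℝ) with hf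
  have hf0 : 0 ≤ f := by rw [hf]; exact Nat.cast_nonneg _
  have hcount : ((wordBall S r).card : ℝ) * f ≤ m * m := by
    rw [hf, hm]; exact_mod_cast hsumN
  have hfK : f ≤ m / (K : ℝ) := by
    rw [le_div_iff₀ hK0]
    have h1 : m * (f * K) ≤ m * m := by
      calc m * (f * K) = (K : ℝ) * m * f := by ring
        _ ≤ ((wordBall S r).card : ℝ) * f := mul_le_mul_of_nonneg_right hKm hf0
        _ ≤ m * m := hcount
    exact le_of_mul_le_mul_left h1 hm0
  have hsd : ((D \ g • D).card : ℝ) = m - f := by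
    have h1 : (D \ g • D).card + (D ∩ g • D).card = D.card :=
      Finset.card_sdiff_add_card_inter D (g • D)
    have h2 : ((D \ g • D).card : ℝ) + f = m := by rw [hf, hm]; exact_mod_cast h1
    linarith
  set P : ℝ := ((innerBoundary S D).card : ℝ) with hP
  have hP0 : 0 ≤ P := by rw [hP]; exact Nat.cast_nonneg _
  have hbound : ((D \ g • D).card : ℝ) ≤ (r : ℝ) * P := by
    rw [hP]; exact_mod_cast card_sdiff_smul_le S hsymm D r g hgB
  have hmain : m - m / K ≤ (R + 1) * P := by
    have h1 : m - m / K ≤ m - f := by linarith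
    have h2 : (r : ℝ) * P ≤ (R + 1) * P := mul_le_mul_of_nonneg_right hrR1 hP0
    linarith
  -- bounding the target
  set t : ℝ := (b / ((1 + ε) * L)) ^ (1 / α) with ht
  have hbase0 : (0 : ℝ) ≤ b / ((1 + ε) * L) := (div_pos hb (mul_pos hε1 hL0)).le
  have ht0 : 0 ≤ t := Real.rpow_nonneg hbase0 _
  have htδ : t ≤ δ := by
    have h1 := Real.rpow_le_rpow hbase0 hE4 (one_div_nonneg.2 hα0.le)
    rwa [← Real.rpow_mul hδ0.le, mul_one_div_cancel hα0.ne', Real.rpow_one] at h1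
  have htR : t * R ≤ c := by
    have heq : b / ((1 + ε) * L) * T = (L + xK) / ((1 + ε) * L) := by
      rw [hT]; field_simp
    have hle : (L + xK) / ((1 + ε) * L) ≤ (1 + ε / 2) / (1 + ε) := by
      rw [div_le_div_iff₀ (mul_pos hε1 hL0) hε1]
      have hx : L + xK ≤ (1 + ε / 2) * L := by linarith
      calc (L + xK) * (1 + ε) ≤ ((1 + ε / 2) * L) * (1 + ε) :=
            mul_le_mul_of_nonneg_right hx hε1.le
        _ = (1 + ε / 2) * ((1 + ε) * L) := by ring
    calc t * R = (b / ((1 + ε) * L) * T) ^ (1 / α) := by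
          rw [ht, hR, ← Real.mul_rpow hbase0 hT0]
      _ ≤ ((1 + ε / 2) / (1 + ε)) ^ (1 / α) := by
          exact Real.rpow_le_rpow (mul_nonneg hbase0 hT0) (heq ▸ hle) (one_div_nonneg.2 hα0.le)
      _ = c := rfl
  have htfinal : t * (R + 1) ≤ 1 - 1 / K := by
    have : t * (R + 1) = t * R + t := by ring
    rw [this]
    have : c + δ ≤ 1 - 1 / K := by rw [hδ] at *; linarith
    linarith
  -- conclusion
  rw [show ((innerBoundary S D).card : ℝ) / (D.card : ℝ) = P / m from rfl]
  rw [le_div_iff₀ hm0]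
  have hR1 : (0 : ℝ) < R + 1 := by linarith
  have hchain : (t * m) * (R + 1) ≤ P * (R + 1) := by
    calc (t * m) * (R + 1) = (t * (R + 1)) * m := by ring
      _ ≤ (1 - 1 / K) * m := mul_le_mul_of_nonneg_right htfinal hm0.le
      _ = m - m / K := by ring
      _ ≤ (R + 1) * P := hmain
      _ = P * (R + 1) := by ring
  exact le_of_mul_le_mul_right hchain hR1
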